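/- Every vertex of Hom(C̄_{2r+1}, K_{r+1}) lies in exactly two edges of Hom(C̄_{2r+1}, K_{r+1}); i.e., for each proper (r+1)-coloring φ of C̄_{2r+1} there are exactly two multi-colorings (A_1,...,A_{2r+1}) of dimension 1 extending φ. -/

import Mathlib

open Finset

section prelim
variable {r : ℕ} (hr : 2 ≤ r)
include hr

lemma val1 : (1 : Fin (2*r+1)).val = 1 := by
  rw [Fin.val_one']; exact Nat.mod_eq_of_lt (by omega)

lemma val2 : (2 : Fin (2*r+1)).val = 2 := by
  rw [show (2 : Fin (2*r+1)) = 1 + 1 by ext; simp [Fin.val_add, Fin.val_one'], Fin.val_add, val1 hr]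
  exact Nat.mod_eq_of_lt (by omega)

lemma val3 : (3 : Fin (2*r+1)).val = 3 := by
  rw [show (3 : Fin (2*r+1)) = 2 + 1 by ext; simp [Fin.val_add, Fin.val_one'], Fin.val_add, val1 hr, val2 hr]
  exact Nat.mod_eq_of_lt (by omega)

lemma fin1_ne_zero : (1 : Fin (2*r+1)) ≠ 0 := by
  intro h; have := congrArg Fin.val h; rw [val1 hr, Fin.val_zero] at this; omega
lemma fin2_ne_zero : (2 : Fin (2*r+1)) ≠ 0 := by
  intro h; have := congrArg Fin.val h; rw [val2 hr, Fin.val_zero] at this; omega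
lemma fin3_ne_zero : (3 : Fin (2*r+1)) ≠ 0 := by
  intro h; have := congrArg Fin.val h; rw [val3 hr, Fin.val_zero] at this; omega

lemma adj_iff (u v : Fin (2*r+1)) :
    (SimpleGraph.cycleGraph (2*r+1)).Adj u v ↔ v = u + 1 ∨ v = u - 1 := by
  rw [SimpleGraph.cycleGraph_adj']
  have h1 : ∀ a b : Fin (2*r+1), (a - b).val = 1 ↔ a - b = 1 := by
    intro a b; rw [Fin.ext_iff, val1 hr]
  rw [h1, h1]
  constructor
  · rintro (h | h)
    · right; rw [← h, sub_sub_cancel]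
    · left; rw [sub_eq_iff_eq_add] at h; rw [h]; exact add_comm 1 u
  · rintro (h | h)
    · right; rw [h]; exact add_sub_cancel_left u 1
    · left; rw [h]; exact sub_sub_cancel u 1

lemma cadj_iff (u v : Fin (2*r+1)) :
    (SimpleGraph.cycleGraph (2*r+1))ᶜ.Adj u v ↔ v ≠ u ∧ v ≠ u + 1 ∧ v ≠ u - 1 := by
  rw [SimpleGraph.compl_adj, adj_iff hr]
  constructor
  · rintro ⟨h, h2⟩; exact ⟨fun e => h e.symm, fun e => h2 (Or.inl e), fun e => h2 (Or.inr e)⟩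
  · rintro ⟨h1, h2, h3⟩
    exact ⟨fun e => h1 e.symm, by rintro (e | e) <;> [exact h2 e; exact h3 e]⟩

lemma sub_one_ne_add_one (v : Fin (2*r+1)) : v - 1 ≠ v + 1 := by
  intro h
  rw [sub_eq_iff_eq_add, add_assoc] at h
  have := left_eq_add.mp h
  rw [show (1:Fin (2*r+1)) + 1 = 2 by ext; simp [Fin.val_add, Fin.val_one']] at this
  exact fin2_ne_zero hr this

lemma add_one_ne_self (v : Fin (2*r+1)) : v + 1 ≠ v := by
  intro h
  exact fin1_ne_zero hr (add_eq_left.mp h)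

lemma sub_one_ne_self (v : Fin (2*r+1)) : v - 1 ≠ v := by
  intro h
  rw [sub_eq_iff_eq_add] at h
  exact fin1_ne_zero hr (left_eq_add.mp h)

lemma sub_one_ne_add_two (w : Fin (2*r+1)) : w - 1 ≠ w + 1 + 1 := by
  intro h
  have h2 : w + (1 + 1 + 1) = w :=
    calc w + (1+1+1) = (w + 1 + 1) + 1 := by simp only [add_assoc]
    _ = (w - 1) + 1 := by rw [← h]
    _ = w := sub_add_cancel w 1
  have h3 := add_eq_left.mp h2
  rw [show (1:Fin (2*r+1)) + 1 + 1 = 3 by ext; simp [Fin.val_add, Fin.val_one']] at h3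
  exact fin3_ne_zero hr h3

end prelim

/-- the candidate cell: doubled set at `w`, extra colour `φ v`. -/
def cellAt (r : ℕ) (φ : Fin (2*r+1) → Fin (r+1)) (v w : Fin (2*r+1)) :
    Fin (2*r+1) → Finset (Fin (r+1)) :=
  fun j => if j = w then {φ w, φ v} else {φ j}

/-- `A` is a cell of `Hom(C̄_{2r+1}, K_{r+1})`. -/
def IsCellOdd (r : ℕ) (A : Fin (2 * r + 1) → Finset (Fin (r + 1))) : Prop :=
  (∀ i, (A i).Nonempty) ∧
    ∀ i j, (SimpleGraph.cycleGraph (2 * r + 1))ᶜ.Adj i j → Disjoint (A i) (A j)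

/-- Every vertex of `Hom(C̄_{2r+1}, K_{r+1})` lies in exactly two edges: for
each proper `(r+1)`-coloring `φ` of `C̄_{2r+1}` there are exactly two
multi-colorings `(A₁,…,A_{2r+1})` of dimension 1 (i.e. `Σ|Aᵢ| = 2r+2`)
extending `φ`. -/
theorem homOddCycle_vertex_in_two_edges (r : ℕ) (hr : 2 ≤ r)
    (φ : Fin (2 * r + 1) → Fin (r + 1))
    (hφ : ∀ a b, (SimpleGraph.cycleGraph (2 * r + 1))ᶜ.Adj a b → φ a ≠ φ b) :
    Nat.card {A : Fin (2 * r + 1) → Finset (Fin (r + 1)) //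
      IsCellOdd r A ∧ (∑ i, (A i).card) = 2 * r + 2 ∧ ∀ i, φ i ∈ A i} = 2 := by
  classical
  have hφ' : ∀ a b : Fin (2*r+1), a ≠ b → φ a = φ b → b = a + 1 ∨ b = a - 1 := by
    intro a b hne heq
    by_contra hc
    push_neg at hc
    exact hφ a b ((cadj_iff hr a b).mpr ⟨fun e => hne e.symm, hc.1, hc.2⟩) heq
  -- fibers
  set F : Fin (r+1) → Finset (Fin (2*r+1)) :=
    fun c => univ.filter (fun i => φ i = c) with hF
  have hsum : ∑ c, (F c).card = 2*r+1 := by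
    rw [← Finset.card_eq_sum_card_fiberwise (fun x _ => mem_univ (φ x)),
      Finset.card_univ, Fintype.card_fin]
  have hFle : ∀ c, (F c).card ≤ 2 := by
    intro c
    by_contra h
    push_neg at h
    obtain ⟨x, y, z, hx, hy, hz, hxy, hxz, hyz⟩ := Finset.two_lt_card_iff.mp h
    have hcx : φ x = c := (mem_filter.mp hx).2
    have hcy : φ y = c := (mem_filter.mp hy).2
    have hcz : φ z = c := (mem_filter.mp hz).2
    have hy' := hφ' x y hxy (hcx.trans hcy.symm)
    have hz' := hφ' x z hxz (hcx.trans hcz.symm)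
    have key : ∀ a b : Fin (2*r+1), a = x + 1 → b = x - 1 → φ a = φ b → False := by
      rintro a b rfl rfl hab
      rcases hφ' _ _ (fun e => sub_one_ne_add_one hr x e.symm) hab with h1 | h1
      · exact sub_one_ne_add_two hr x h1
      · rw [add_sub_cancel_right] at h1
        exact sub_one_ne_self hr x h1
    rcases hy' with hy1 | hy1 <;> rcases hz' with hz1 | hz1
    · exact hyz (hy1.trans hz1.symm)
    · exact key y z hy1 hz1 (hcy.trans hcz.symm)
    · exact key z y hz1 hy1 (hcz.trans hcy.symm)
    · exact hyz (hy1.trans hz1.symm)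
  have hFne : ∀ c, (F c).Nonempty := by
    intro c
    rw [← Finset.card_pos]
    by_contra h
    push_neg at h
    interval_cases h' : (F c).card
    have h0 : (F c).card = 0 := by omega
    have hle : ∑ c', (F c').card ≤ 2 * r := by
      calc ∑ c', (F c').card = (∑ c' ∈ univ.erase c, (F c').card) + (F c).card :=
            (Finset.sum_erase_add _ _ (mem_univ c)).symm
      _ ≤ (univ.erase c).card * 2 + 0 := by
            rw [h0]
            exact Nat.add_le_add (Finset.sum_le_card_nsmul _ _ 2 (fun x _ => hFle x)) le_rfl
      _ = 2 * r := by rw [Finset.card_erase_of_mem (mem_univ c), Finset.card_univ,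
            Fintype.card_fin]; omega
    omega
  have hF1 : ∀ c, 1 ≤ (F c).card := fun c => Finset.card_pos.mpr (hFne c)
  -- exactly one singleton fiber
  set S : Finset (Fin (r+1)) := univ.filter (fun c => (F c).card = 1) with hSdef
  have hS : S.card = 1 := by
    have key : ∀ c ∈ (univ : Finset (Fin (r+1))),
        (F c).card + (if (F c).card = 1 then 1 else 0) = 2 := by
      intro c _
      have := hFle c; have := hF1 c
      split <;> omega
    have h2 := Finset.sum_congr rfl key
    rw [Finset.sum_add_distrib, hsum, ← Finset.card_filter, Finset.sum_const,
      Finset.card_univ, Fintype.card_fin, smul_eq_mul] at h2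
    have h3 : S.card = (univ.filter fun c => (F c).card = 1).card := rfl
    rw [h3]
    omega
  obtain ⟨cstar, hcstar⟩ := Finset.card_eq_one.mp hS
  have hFc : (F cstar).card = 1 := by
    have : cstar ∈ S := hcstar ▸ Finset.mem_singleton_self _
    exact (mem_filter.mp this).2
  obtain ⟨v, hvF⟩ := Finset.card_eq_one.mp hFc
  have hφv : φ v = cstar := by
    have : v ∈ F cstar := hvF ▸ Finset.mem_singleton_self v
    exact (mem_filter.mp this).2
  have hv : ∀ j, φ j = φ v → j = v := by
    intro j hj
    have : j ∈ F cstar := mem_filter.mpr ⟨mem_univ j, hj.trans hφv⟩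
    rw [hvF] at this
    exact Finset.mem_singleton.mp this
  have hSuniq : ∀ c, (F c).card = 1 → c = cstar := by
    intro c hc
    have : c ∈ S := mem_filter.mpr ⟨mem_univ c, hc⟩
    rw [hcstar] at this
    exact Finset.mem_singleton.mp this
  -- membership of the two candidates
  have hmem : ∀ w, (SimpleGraph.cycleGraph (2*r+1)).Adj w v →
      IsCellOdd r (cellAt r φ v w) ∧ (∑ i, ((cellAt r φ v w) i).card) = 2*r+2 ∧
        ∀ i, φ i ∈ cellAt r φ v w i := by
    intro w hadj
    have hwv : w ≠ v := hadj.ne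
    have hφwv : φ w ≠ φ v := fun e => hwv (hv w e)
    refine ⟨⟨?_, ?_⟩, ?_, ?_⟩
    · intro i; unfold cellAt; split <;> simp
    · intro i j hij
      have hij' := (cadj_iff hr i j).mp hij
      have hfij : φ i ≠ φ j := hφ i j hij
      have hvj : ∀ k, (SimpleGraph.cycleGraph (2*r+1))ᶜ.Adj w k → φ k ≠ φ v := by
        intro k hk e
        have := hv k e
        subst this
        exact (SimpleGraph.compl_adj _ _ _).mp hk |>.2 hadj
      unfold cellAt
      rcases eq_or_ne i w with hi | hi
      · rcases eq_or_ne j w with hj | hj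
        · exact absurd (hj.trans hi.symm) hij'.1
        · rw [if_pos hi, if_neg hj, Finset.disjoint_left]
          intro a ha
          rw [Finset.mem_insert, Finset.mem_singleton] at ha
          rw [Finset.mem_singleton]
          rcases ha with rfl | rfl
          · intro e; exact hfij (hi ▸ e)
          · intro e; exact hvj j (hi ▸ hij) e.symm
      · rcases eq_or_ne j w with hj | hj
        · rw [if_neg hi, if_pos hj, Finset.disjoint_left]
          intro a ha
          rw [Finset.mem_singleton] at ha
          subst ha
          rw [Finset.mem_insert, Finset.mem_singleton]
          push_neg
          refine ⟨fun e => hfij (e.trans (hj ▸ rfl)), ?_⟩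
          intro e
          exact hvj i (hj ▸ hij.symm) e
        · rw [if_neg hi, if_neg hj]
          exact Finset.disjoint_singleton.mpr hfij
    · have hcard : ∀ i, ((cellAt r φ v w) i).card = if i = w then 2 else 1 := by
        intro i; unfold cellAt; split
        · rename_i h; subst h; exact Finset.card_pair (fun e => hφwv e)
        · simp
      rw [Finset.sum_congr rfl (fun i _ => hcard i)]
      have hsplit : ∀ i : Fin (2*r+1), (if i = w then (2:ℕ) else 1)
          = 1 + (if i = w then 1 else 0) := by intro i; split <;> rfl
      rw [Finset.sum_congr rfl (fun i _ => hsplit i), Finset.sum_add_distrib,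
        Finset.sum_const, Finset.sum_ite_eq' univ w (fun _ => 1), if_pos (mem_univ w),
        Finset.card_univ, Fintype.card_fin, smul_eq_mul]
      omega
    · intro i; unfold cellAt; split
      · rename_i h; subst h; simp
      · simp
  -- disjointness phase: classification
  have hclass : ∀ A : Fin (2*r+1) → Finset (Fin (r+1)), IsCellOdd r A →
      (∑ i, (A i).card) = 2*r+2 → (∀ i, φ i ∈ A i) →
      A = cellAt r φ v (v-1) ∨ A = cellAt r φ v (v+1) := by
    rintro A ⟨hne, hdisj⟩ hsumA hext
    have hge : ∀ i, 1 ≤ (A i).card := fun i => Finset.card_pos.mpr ⟨φ i, hext i⟩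
    set f : Fin (2*r+1) → ℕ := fun i => (A i).card - 1 with hfdef
    have hsum1 : ∑ i, f i = 1 := by
      have h2 : (∑ i, f i) + (∑ _i : Fin (2*r+1), 1) = ∑ i, (A i).card := by
        rw [← Finset.sum_add_distrib]
        exact Finset.sum_congr rfl (fun i _ => Nat.succ_pred_eq_of_pos (hge i))
      have h3 : (∑ _i : Fin (2*r+1), (1:ℕ)) = 2*r+1 := by
        rw [Finset.sum_const, Finset.card_univ, Fintype.card_fin, smul_eq_mul]; omega
      rw [hsumA, h3] at h2
      omega
    obtain ⟨w, hwmem, hw0⟩ : ∃ w ∈ (univ : Finset (Fin (2*r+1))), f w ≠ 0 := by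
      by_contra h
      push_neg at h
      rw [Finset.sum_eq_zero h] at hsum1
      omega
    have hfw : f w = 1 := by
      have := Finset.single_le_sum (f := f) (fun i _ => Nat.zero_le _) hwmem
      omega
    have hfj : ∀ j, j ≠ w → f j = 0 := by
      intro j hj
      have herase : ∑ i ∈ univ.erase w, f i = 0 := by
        have := Finset.sum_erase_add univ f hwmem
        omega
      exact Finset.sum_eq_zero_iff.mp herase j (Finset.mem_erase.mpr ⟨hj, mem_univ j⟩)
    have hcardw : (A w).card = 2 := by
      have hfw' : (A w).card - 1 = 1 := hfw
      have := hge w; omega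
    have hAj : ∀ j, j ≠ w → A j = {φ j} := by
      intro j hj
      have hc1 : (A j).card = 1 := by
        have h0 : (A j).card - 1 = 0 := hfj j hj
        have := hge j; omega
      obtain ⟨a, ha⟩ := Finset.card_eq_one.mp hc1
      have := hext j
      rw [ha, Finset.mem_singleton] at this
      rw [ha, ← this]
    obtain ⟨c, hcne, hAw⟩ : ∃ c, c ≠ φ w ∧ A w = {φ w, c} := by
      obtain ⟨a, b, hab, hA⟩ := Finset.card_eq_two.mp hcardw
      have := hext w
      rw [hA, Finset.mem_insert, Finset.mem_singleton] at this
      rcases this with h | h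
      · exact ⟨b, by rw [← h] at hab; exact fun e => hab e.symm, by rw [hA, h]⟩
      · exact ⟨a, by rw [← h] at hab; exact hab, by rw [hA, h, Finset.pair_comm]⟩
    have hcav : ∀ j, (SimpleGraph.cycleGraph (2*r+1))ᶜ.Adj w j → c ≠ φ j := by
      intro j hj e
      have hd := hdisj w j hj
      have hjw : j ≠ w := fun h => ((SimpleGraph.compl_adj _ _ _).mp hj).1 h.symm
      have hcA : c ∈ A w := by rw [hAw]; simp
      have : c ∉ A j := (Finset.disjoint_left.mp hd) hcA
      rw [hAj j hjw, Finset.mem_singleton] at this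
      exact this e
    obtain ⟨x, hx⟩ := hFne c
    have hφx : φ x = c := (mem_filter.mp hx).2
    have hxw : x ≠ w := fun e => hcne (by rw [← hφx, e])
    have hadjx : ∀ y, φ y = c → y = w + 1 ∨ y = w - 1 := by
      intro y hy
      have hyw : y ≠ w := fun e => hcne (by rw [← hy, e])
      by_contra hc
      push_neg at hc
      exact hcav y ((cadj_iff hr w y).mpr ⟨hyw, hc.1, hc.2⟩) hy.symm
    have hxonly : ∀ y, φ y = c → y = x := by
      intro y hy
      by_contra hyx
      have h1 := hadjx x hφx
      have h2 := hadjx y hy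
      have key : ∀ a b : Fin (2*r+1), a = w + 1 → b = w - 1 → φ a = φ b → False := by
        rintro a b rfl rfl hab
        rcases hφ' _ _ (fun e => sub_one_ne_add_one hr w e.symm) hab with h3 | h3
        · exact sub_one_ne_add_two hr w h3
        · rw [add_sub_cancel_right] at h3
          exact sub_one_ne_self hr w h3
      rcases h1 with hx1 | hx1 <;> rcases h2 with h3 | h3
      · exact hyx (h3.trans hx1.symm)
      · exact key x y hx1 h3 (hφx.trans hy.symm)
      · exact key y x h3 hx1 (hy.trans hφx.symm)
      · exact hyx (h3.trans hx1.symm)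
    have hFcx : (F c).card = 1 := by
      rw [show F c = {x} from Finset.eq_singleton_iff_unique_mem.mpr
        ⟨mem_filter.mpr ⟨mem_univ x, hφx⟩, fun y hy => hxonly y (mem_filter.mp hy).2⟩]
      exact Finset.card_singleton x
    have hxv : x = v := hv x (by rw [hφx, hSuniq c hFcx, ← hφv])
    subst hxv
    have hcφv : c = φ x := hφx.symm
    have heq : ∀ w', w = w' → A = cellAt r φ x w' := by
      rintro w' rfl
      funext j
      unfold cellAt
      split
      · rename_i h; subst h; rw [hAw, hcφv]
      · rename_i h; exact hAj j h
    rcases hadjx x hφx with h | h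
    · left; exact heq (x-1) (by rw [h, add_sub_cancel_right])
    · right; exact heq (x+1) (by rw [h, sub_add_cancel])
  -- the two candidates are distinct
  have hBC : cellAt r φ v (v-1) ≠ cellAt r φ v (v+1) := by
    intro h
    have h1 := congrFun h (v-1)
    unfold cellAt at h1
    rw [if_pos rfl, if_neg (sub_one_ne_add_one hr v)] at h1
    have : φ v ∈ ({φ (v-1)} : Finset (Fin (r+1))) := by
      rw [← h1]; simp
    rw [Finset.mem_singleton] at this
    exact sub_one_ne_self hr v (hv (v-1) this.symm)
  -- adjacency of v±1 to v
  have hadj1 : (SimpleGraph.cycleGraph (2*r+1)).Adj (v-1) v := by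
    rw [adj_iff hr]; left; rw [sub_add_cancel]
  have hadj2 : (SimpleGraph.cycleGraph (2*r+1)).Adj (v+1) v := by
    rw [adj_iff hr]; right; rw [add_sub_cancel_right]
  obtain ⟨hB1, hB2, hB3⟩ := hmem (v-1) hadj1
  obtain ⟨hC1, hC2, hC3⟩ := hmem (v+1) hadj2
  rw [Nat.card_eq_two_iff]
  refine ⟨⟨cellAt r φ v (v-1), hB1, hB2, hB3⟩, ⟨cellAt r φ v (v+1), hC1, hC2, hC3⟩,
    fun e => hBC (congrArg Subtype.val e), ?_⟩
  rw [Set.eq_univ_iff_forall]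
  rintro ⟨A, hA1, hA2, hA3⟩
  rcases hclass A hA1 hA2 hA3 with h | h
  · left; exact Subtype.ext h
  · right; exact Subtype.ext h
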